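/- For real numbers c > r > 0, the identity (1/(2π))·∫_0^{2π} log|c + r·cos θ| dθ = log((c + √(c² - r²))/2) holds. -/

import Mathlib

open Complex Real intervalIntegral
-- mean value: ∫₀^{2π} log|a + e^{iθ}| dθ = 2π log a, for a > 1
lemma key (a : ℝ) (ha : 1 < a) :
    ∫ θ in (0:ℝ)..(2*Real.pi), Real.log (‖(a:ℂ) + Complex.exp (θ * Complex.I)‖)
      = 2 * Real.pi * Real.log a := by
  have ha0 : (0:ℝ) < a := lt_trans one_pos ha
  set f : ℂ → ℂ := fun z => Complex.log ((a:ℂ) + z) with hf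
  have hslit : ∀ z : ℂ, ‖z‖ ≤ 1 → (a:ℂ) + z ∈ Complex.slitPlane := by
    intro z hz
    refine Or.inl ?_
    have : |z.re| ≤ 1 := le_trans (Complex.abs_re_le_norm z) hz
    have : -1 ≤ z.re := neg_le_of_abs_le this
    simp only [Complex.add_re, Complex.ofReal_re]
    linarith
  have hdiff : ∀ z ∈ Metric.closedBall (0:ℂ) 1, DifferentiableAt ℂ f z := by
    intro z hz
    have hz' : ‖z‖ ≤ 1 := by simpa [Complex.dist_eq] using hz
    exact (Complex.differentiableAt_log (hslit z hz')).comp z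
      ((differentiableAt_const _).add differentiableAt_id)
  have hcauchy : (∮ z in C((0:ℂ), 1), (z - 0)⁻¹ • f z) = (2 * Real.pi * Complex.I : ℂ) • f 0 :=
    Complex.circleIntegral_sub_inv_smul_of_differentiable_on_off_countable
      Set.countable_empty (by simp) (fun z hz => (hdiff z hz).continuousAt.continuousWithinAt)
      (fun z hz => hdiff z (Metric.ball_subset_closedBall hz.1))
  rw [circleIntegral] at hcauchy
  simp only [deriv_circleMap, circleMap_zero, sub_zero, smul_eq_mul, one_mul,
    Complex.ofReal_one] at hcauchy
  have heq : ∀ θ : ℝ, Complex.exp (θ * Complex.I) * Complex.I *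
      ((Complex.exp (θ * Complex.I))⁻¹ * f (Complex.exp (θ * Complex.I)))
      = Complex.I * f (Complex.exp (θ * Complex.I)) := by
    intro θ
    have hne : Complex.exp (θ * Complex.I) ≠ 0 := Complex.exp_ne_zero _
    field_simp
  rw [intervalIntegral.integral_congr (fun θ _ => heq θ)] at hcauchy
  rw [intervalIntegral.integral_const_mul] at hcauchy
  have hI : (∫ θ in (0:ℝ)..(2*Real.pi), f (Complex.exp (θ * Complex.I)))
      = 2 * Real.pi * Complex.log a := by
    have hIne : (Complex.I : ℂ) ≠ 0 := Complex.I_ne_zero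
    have := hcauchy
    simp only [hf] at this ⊢
    have h2 : Complex.I * ∫ θ in (0:ℝ)..(2*Real.pi), Complex.log ((a:ℂ) + Complex.exp (θ * Complex.I))
        = Complex.I * (2 * Real.pi * Complex.log ((a:ℂ) + 0)) := by
      rw [this]; push_cast; ring
    have := mul_left_cancel₀ hIne h2
    simpa using this
  -- now take real parts
  have hcont : Continuous fun θ : ℝ => f (Complex.exp (θ * Complex.I)) := by
    rw [continuous_iff_continuousAt]
    intro θ
    have h1 : ContinuousAt f (Complex.exp (θ * Complex.I)) := by
      refine (hdiff _ ?_).continuousAt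
      simp [Complex.dist_eq, Complex.norm_exp]
    have h2 : ContinuousAt (fun θ : ℝ => Complex.exp ((θ:ℂ) * Complex.I)) θ := by fun_prop
    exact ContinuousAt.comp (g := f) (f := fun θ : ℝ => Complex.exp ((θ:ℂ) * Complex.I))
      (x := θ) h1 h2
  have hint : IntervalIntegrable (fun θ : ℝ => f (Complex.exp (θ * Complex.I)))
      MeasureTheory.volume 0 (2*Real.pi) := hcont.intervalIntegrable _ _
  have hre := congrArg Complex.re hI
  have hcomm : (∫ θ in (0:ℝ)..(2*Real.pi),
        Real.log (‖(a:ℂ) + Complex.exp (θ * Complex.I)‖))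
      = (∫ θ in (0:ℝ)..(2*Real.pi), f (Complex.exp (θ * Complex.I))).re := by
    rw [show (∫ θ in (0:ℝ)..(2*Real.pi), f (Complex.exp (θ * Complex.I))).re
        = Complex.reCLM (∫ θ in (0:ℝ)..(2*Real.pi), f (Complex.exp (θ * Complex.I))) from rfl,
      ← Complex.reCLM.intervalIntegral_comp_comm hint]
    apply intervalIntegral.integral_congr
    intro θ _
    simp [hf, Complex.log_re]
  rw [hcomm, hre]
  simp [Complex.mul_re, Complex.log_re, Complex.log_im, Complex.arg_ofReal_of_nonneg ha0.le,
    abs_of_pos ha0]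

theorem stmt5 (c r : ℝ) (hr : 0 < r) (hrc : r < c) :
    (1 / (2 * Real.pi)) * ∫ θ in (0 : ℝ)..(2 * Real.pi), Real.log |c + r * Real.cos θ| =
      Real.log ((c + Real.sqrt (c ^ 2 - r ^ 2)) / 2) := by
  have hc : 0 < c := lt_trans hr hrc
  set s := Real.sqrt (c ^ 2 - r ^ 2) with hs
  have hs2 : s ^ 2 = c ^ 2 - r ^ 2 := Real.sq_sqrt (by nlinarith)
  have hs0 : 0 < s := Real.sqrt_pos.mpr (by nlinarith)
  set a := (c + s) / r with hadef
  have ha1 : 1 < a := by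
    rw [hadef, lt_div_iff₀ hr]
    linarith
  have ha0 : 0 < a := lt_trans one_pos ha1
  have hkey : r * (a ^ 2 + 1) = 2 * c * a := by
    rw [hadef]
    field_simp
    nlinarith
  -- pointwise identity
  have hpt : ∀ θ : ℝ, Real.log |c + r * Real.cos θ|
      = Real.log (r / (2 * a)) +
        2 * Real.log (‖(a:ℂ) + Complex.exp ((θ:ℂ) * Complex.I)‖) := by
    intro θ
    have hcos : -1 ≤ Real.cos θ := Real.neg_one_le_cos θ
    have hpos : 0 < c + r * Real.cos θ := by nlinarith [Real.cos_le_one θ]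
    have habs : (‖(a:ℂ) + Complex.exp ((θ:ℂ) * Complex.I)‖) ^ 2
        = a ^ 2 + 2 * a * Real.cos θ + 1 := by
      rw [Complex.sq_norm, Complex.normSq_apply]
      simp [Complex.exp_mul_I, Complex.add_re, Complex.add_im, Complex.cos_ofReal_re,
        Complex.sin_ofReal_re]
      ring_nf
      nlinarith [Real.sin_sq_add_cos_sq θ]
    have habs0 : 0 < ‖(a:ℂ) + Complex.exp ((θ:ℂ) * Complex.I)‖ := by
      have : ((a:ℂ) + Complex.exp ((θ:ℂ) * Complex.I)).re ≠ 0 := by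
        have := Complex.abs_re_le_norm (Complex.exp ((θ:ℂ) * Complex.I))
        rw [Complex.norm_exp_ofReal_mul_I] at this
        simp only [Complex.add_re, Complex.ofReal_re]
        have := neg_le_of_abs_le this
        linarith
      exact norm_pos_iff.mpr (fun h => this (by rw [h]; simp))
    have hval : c + r * Real.cos θ
        = (r / (2 * a)) * (‖(a:ℂ) + Complex.exp ((θ:ℂ) * Complex.I)‖) ^ 2 := by
      rw [habs]
      field_simp
      nlinarith
    rw [abs_of_pos hpos, hval, Real.log_mul (by positivity) (pow_ne_zero _ habs0.ne'),
      Real.log_pow]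
    push_cast
    ring
  -- integrability of the log-abs part
  have hcontg : Continuous fun θ : ℝ =>
      Real.log (‖(a:ℂ) + Complex.exp ((θ:ℂ) * Complex.I)‖) := by
    rw [continuous_iff_continuousAt]
    intro θ
    have habs0 : ‖(a:ℂ) + Complex.exp ((θ:ℂ) * Complex.I)‖ ≠ 0 := by
      have h2 := Complex.abs_re_le_norm (Complex.exp ((θ:ℂ) * Complex.I))
      rw [Complex.norm_exp_ofReal_mul_I] at h2
      have h3 := neg_le_of_abs_le h2
      intro h
      have hz : (a:ℂ) + Complex.exp ((θ:ℂ) * Complex.I) = 0 := norm_eq_zero.mp h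
      have : ((a:ℂ) + Complex.exp ((θ:ℂ) * Complex.I)).re = 0 := by rw [hz]; simp
      simp only [Complex.add_re, Complex.ofReal_re] at this
      linarith
    have h1 : ContinuousAt Real.log (‖(a:ℂ) + Complex.exp ((θ:ℂ) * Complex.I)‖) :=
      Real.continuousAt_log habs0
    have h2 : ContinuousAt (fun θ : ℝ =>
        ‖(a:ℂ) + Complex.exp ((θ:ℂ) * Complex.I)‖) θ :=
      (continuous_norm.comp
        (by fun_prop : Continuous fun θ : ℝ => (a:ℂ) + Complex.exp ((θ:ℂ) * Complex.I))).continuousAt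
    exact ContinuousAt.comp (g := Real.log)
      (f := fun θ : ℝ => ‖(a:ℂ) + Complex.exp ((θ:ℂ) * Complex.I)‖) (x := θ) h1 h2
  have hintg : IntervalIntegrable (fun θ : ℝ =>
      2 * Real.log (‖(a:ℂ) + Complex.exp ((θ:ℂ) * Complex.I)‖))
      MeasureTheory.volume 0 (2 * Real.pi) :=
    ((continuous_const.mul hcontg)).intervalIntegrable _ _
  have hintc : IntervalIntegrable (fun _ : ℝ => Real.log (r / (2 * a)))
      MeasureTheory.volume 0 (2 * Real.pi) := intervalIntegrable_const
  -- compute the integral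
  have hI : ∫ θ in (0:ℝ)..(2 * Real.pi), Real.log |c + r * Real.cos θ|
      = 2 * Real.pi * Real.log (r / (2 * a)) + 2 * (2 * Real.pi * Real.log a) := by
    rw [intervalIntegral.integral_congr (fun θ _ => hpt θ),
      intervalIntegral.integral_add hintc hintg,
      intervalIntegral.integral_const, intervalIntegral.integral_const_mul, key a ha1]
    simp only [smul_eq_mul]
    ring
  rw [hI]
  have hpi : Real.pi ≠ 0 := Real.pi_ne_zero
  have hlog : Real.log (r / (2 * a)) + 2 * Real.log a = Real.log ((c + s) / 2) := by
    rw [show (2:ℝ) * Real.log a = Real.log (a ^ 2) by rw [Real.log_pow]; push_cast; ring,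
      ← Real.log_mul (by positivity) (by positivity)]
    congr 1
    rw [hadef]
    field_simp
  field_simp
  rw [← hlog]
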